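/- Let f_n be entire functions of the form f_n(z) = C_n ∏_j (1 + γ_{n,j} z) e^{α_n z} with C_n > 0, γ_{n,j} ≥ 0, ∑_j γ_{n,j} < ∞, α_n ≥ 0. Suppose φ_n^{(0)} = log C_n → φ^{(0)}, φ_n^{(1)} = α_n + ∑_j γ_{n,j} → φ^{(1)}, and φ_n^{(2)} = -∑_j γ_{n,j}² → 0. Then f_n converges uniformly on compact subsets of ℂ to exp(φ^{(0)} + φ^{(1)} z). -/

import Mathlib

open Filter Complex

private lemma tprod_eq_cexp_tsum_log (f : ℕ → ℂ) (hfn : ∀ j, f j ≠ 0)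
    (hf : Summable fun j => Complex.log (f j)) :
    ∏' j, f j = Complex.exp (∑' j, Complex.log (f j)) := by
  have h1 : HasProd (fun j => Complex.exp (Complex.log (f j)))
      (Complex.exp (∑' j, Complex.log (f j))) := hf.hasSum.cexp
  have heq : (fun j => Complex.exp (Complex.log (f j))) = f :=
    funext fun j => Complex.exp_log (hfn j)
  rw [heq] at h1
  exact h1.tprod_eq

/-- Convergence lemma: if f_n(z) = C_n ∏_j (1+γ_{n,j} z) e^{α_n z} with
log C_n → φ⁰, α_n + ∑_j γ_{n,j} → φ¹ and ∑_j γ_{n,j}² → 0, then f_n converges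
uniformly on compact subsets of ℂ to exp(φ⁰ + φ¹ z). -/
theorem stmt6 (C α : ℕ → ℝ) (γ : ℕ → ℕ → ℝ) (φ0 φ1 : ℝ)
    (hC : ∀ n, 0 < C n) (hα : ∀ n, 0 ≤ α n) (hγ : ∀ n j, 0 ≤ γ n j)
    (hsum : ∀ n, Summable (γ n))
    (h0 : Filter.Tendsto (fun n => Real.log (C n)) Filter.atTop (nhds φ0))
    (h1 : Filter.Tendsto (fun n => α n + ∑' j, γ n j) Filter.atTop (nhds φ1))
    (h2 : Filter.Tendsto (fun n => ∑' j, (γ n j) ^ 2) Filter.atTop (nhds 0)) :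
    TendstoLocallyUniformly
      (fun n z => (C n : ℂ) * (∏' j, (1 + (γ n j : ℂ) * z)) * Complex.exp ((α n : ℂ) * z))
      (fun z => Complex.exp ((φ0 : ℂ) + (φ1 : ℂ) * z)) Filter.atTop := by
  set S : ℕ → ℝ := fun n => ∑' j, γ n j with hSdef
  set Q : ℕ → ℝ := fun n => ∑' j, (γ n j) ^ 2 with hQdef
  have hsq : ∀ n, Summable (fun j => (γ n j) ^ 2) := by
    intro n
    refine Summable.of_nonneg_of_le (fun j => sq_nonneg _) (fun j => ?_)
      ((hsum n).mul_left (S n))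
    have hj : γ n j ≤ S n := Summable.le_tsum (hsum n) j (fun i _ => hγ n i)
    nlinarith [hγ n j]
  have hQ0 : ∀ n, 0 ≤ Q n := fun n => tsum_nonneg fun j => sq_nonneg _
  have hγleQ : ∀ n j, (γ n j) ^ 2 ≤ Q n := fun n j =>
    Summable.le_tsum (hsq n) j (fun i _ => sq_nonneg _)
  rw [tendstoLocallyUniformly_iff_forall_isCompact]
  intro K hK
  obtain ⟨R, hR1, hKR⟩ : ∃ R : ℝ, 1 ≤ R ∧ K ⊆ Metric.closedBall 0 R := by
    obtain ⟨r, hr⟩ := (Metric.isBounded_iff_subset_closedBall 0).1 hK.isBounded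
    exact ⟨max r 1, le_max_right _ _,
      hr.trans (Metric.closedBall_subset_closedBall (le_max_left _ _))⟩
  have hR0 : (0 : ℝ) < R := lt_of_lt_of_le one_pos hR1
  set B : ℝ := |φ0| + |φ1| * R with hBdef
  rw [Metric.tendstoUniformlyOn_iff]
  intro ε hε
  set δ : ℕ → ℝ := fun n => |Real.log (C n) - φ0| + R * |α n + S n - φ1| + R ^ 2 * Q n
    with hδdef
  have hδ0 : Tendsto δ atTop (nhds 0) := by
    have t1 : Tendsto (fun n => |Real.log (C n) - φ0|) atTop (nhds 0) := by
      have := (h0.sub (tendsto_const_nhds (x := φ0))).abs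
      simpa using this
    have t2 : Tendsto (fun n => R * |α n + S n - φ1|) atTop (nhds 0) := by
      have := ((h1.sub (tendsto_const_nhds (x := φ1))).abs).const_mul R
      simpa using this
    have t3 : Tendsto (fun n => R ^ 2 * Q n) atTop (nhds 0) := by
      have := h2.const_mul (R ^ 2)
      simpa using this
    have := (t1.add t2).add t3
    simpa using this
  have hεB : 0 < min 1 (ε / (2 * Real.exp B)) := by
    have := Real.exp_pos B
    positivity
  have hev1 : ∀ᶠ n in atTop, δ n < min 1 (ε / (2 * Real.exp B)) :=
    hδ0.eventually (gt_mem_nhds hεB)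
  have hev2 : ∀ᶠ n in atTop, Q n * R ^ 2 ≤ 1 / 4 := by
    have hp : (0 : ℝ) < 1 / (4 * R ^ 2) := by positivity
    filter_upwards [h2.eventually (gt_mem_nhds hp)] with n hn
    have h4 : Q n * (4 * R ^ 2) < 1 := (lt_div_iff₀ (by positivity)).1 hn
    nlinarith [h4]
  filter_upwards [hev1, hev2] with n hn1 hn2
  intro z hz
  have hzR : ‖z‖ ≤ R := by
    have := hKR hz
    simpa [Complex.dist_eq] using Metric.mem_closedBall.1 this
  -- basic bounds on the factors
  have hsqrt : Real.sqrt (Q n) * R ≤ 1 / 2 := by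
    nlinarith [Real.sq_sqrt (hQ0 n), Real.sqrt_nonneg (Q n), hR0,
      sq_nonneg (Real.sqrt (Q n) * R - 1 / 2)]
  have hγsqrt : ∀ j, γ n j ≤ Real.sqrt (Q n) := by
    intro j
    have := hγleQ n j
    nlinarith [Real.sq_sqrt (hQ0 n), Real.sqrt_nonneg (Q n), hγ n j]
  have hwle : ∀ j, ‖(γ n j : ℂ) * z‖ ≤ R * γ n j := by
    intro j
    rw [norm_mul, Complex.norm_real, Real.norm_eq_abs, _root_.abs_of_nonneg (hγ n j)]
    calc γ n j * ‖z‖ ≤ γ n j * R := by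
          exact mul_le_mul_of_nonneg_left hzR (hγ n j)
      _ = R * γ n j := mul_comm _ _
  have hwhalf : ∀ j, ‖(γ n j : ℂ) * z‖ ≤ 1 / 2 := by
    intro j
    refine (hwle j).trans ?_
    calc R * γ n j ≤ R * Real.sqrt (Q n) := by
          exact mul_le_mul_of_nonneg_left (hγsqrt j) (le_of_lt hR0)
      _ = Real.sqrt (Q n) * R := mul_comm _ _
      _ ≤ 1 / 2 := hsqrt
  have hwlt : ∀ j, ‖(γ n j : ℂ) * z‖ < 1 := fun j => lt_of_le_of_lt (hwhalf j) (by norm_num)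
  have hne : ∀ j, (1 : ℂ) + (γ n j : ℂ) * z ≠ 0 := by
    intro j h
    have heq : (γ n j : ℂ) * z = -1 := by linear_combination h
    have hlt := hwlt j
    rw [heq] at hlt
    simp at hlt
  -- summability of the logs
  have hlog : Summable (fun j => Complex.log (1 + (γ n j : ℂ) * z)) := by
    refine Summable.of_norm_bounded (g := fun j => (3 / 2) * (R * γ n j))
      (((hsum n).mul_left R).mul_left (3 / 2)) (fun j => ?_)
    refine (Complex.norm_log_one_add_half_le_self (hwhalf j)).trans ?_
    exact mul_le_mul_of_nonneg_left (hwle j) (by norm_num)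
  -- rewrite f_n as an exponential
  have hCexp : ((C n : ℝ) : ℂ) = Complex.exp ((Real.log (C n) : ℝ) : ℂ) := by
    rw [← Complex.ofReal_exp, Real.exp_log (hC n)]
  have hfe : (C n : ℂ) * (∏' j, (1 + (γ n j : ℂ) * z)) * Complex.exp ((α n : ℂ) * z)
      = Complex.exp (((Real.log (C n) : ℝ) : ℂ) + (α n : ℂ) * z
          + ∑' j, Complex.log (1 + (γ n j : ℂ) * z)) := by
    rw [tprod_eq_cexp_tsum_log _ hne hlog, hCexp, ← Complex.exp_add, ← Complex.exp_add]
    congr 1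
    ring
  -- summability facts for the estimate
  have hwsummable : Summable (fun j => (γ n j : ℂ) * z) :=
    ((Complex.summable_ofReal).2 (hsum n)).mul_right z
  have hwsum_eq : (∑' j, (γ n j : ℂ) * z) = ((S n : ℝ) : ℂ) * z := by
    rw [tsum_mul_right, Complex.ofReal_tsum]
  have hsub : ∀ j, ‖Complex.log (1 + (γ n j : ℂ) * z) - (γ n j : ℂ) * z‖
      ≤ R ^ 2 * (γ n j) ^ 2 := by
    intro j
    have h := Complex.norm_log_one_add_sub_self_le (hwlt j)
    have hhalf := hwhalf j
    have hn0 : (0 : ℝ) ≤ ‖(γ n j : ℂ) * z‖ := norm_nonneg _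
    have hinv : (1 - ‖(γ n j : ℂ) * z‖)⁻¹ ≤ 2 := by
      rw [inv_le_comm₀ (by linarith) (by norm_num)]
      linarith
    have h2' : ‖(γ n j : ℂ) * z‖ ^ 2 * (1 - ‖(γ n j : ℂ) * z‖)⁻¹ / 2
        ≤ ‖(γ n j : ℂ) * z‖ ^ 2 := by
      nlinarith [sq_nonneg ‖(γ n j : ℂ) * z‖]
    refine h.trans (h2'.trans ?_)
    have := hwle j
    nlinarith [hγ n j, hn0]
  have hnormsummable : Summable (fun j =>
      ‖Complex.log (1 + (γ n j : ℂ) * z) - (γ n j : ℂ) * z‖) :=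
    Summable.of_nonneg_of_le (fun j => norm_nonneg _) hsub ((hsq n).mul_left (R ^ 2))
  have hL : ‖(∑' j, Complex.log (1 + (γ n j : ℂ) * z)) - ((S n : ℝ) : ℂ) * z‖
      ≤ R ^ 2 * Q n := by
    rw [← hwsum_eq, ← Summable.tsum_sub hlog hwsummable]
    refine (norm_tsum_le_tsum_norm hnormsummable).trans ?_
    have := Summable.tsum_le_tsum hsub hnormsummable ((hsq n).mul_left (R ^ 2))
    rwa [tsum_mul_left] at this
  -- bound the exponent difference
  set X : ℂ := ((Real.log (C n) : ℝ) : ℂ) + (α n : ℂ) * z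
      + ∑' j, Complex.log (1 + (γ n j : ℂ) * z) with hXdef
  set T : ℂ := (φ0 : ℂ) + (φ1 : ℂ) * z with hTdef
  have hE : ‖X - T‖ ≤ δ n := by
    have hXT : X - T = (((Real.log (C n) - φ0 : ℝ)) : ℂ)
        + (((α n + S n - φ1 : ℝ)) : ℂ) * z
        + ((∑' j, Complex.log (1 + (γ n j : ℂ) * z)) - ((S n : ℝ) : ℂ) * z) := by
      rw [hXdef, hTdef]
      push_cast
      ring
    rw [hXT]
    refine (norm_add_le _ _).trans ?_
    refine le_trans (add_le_add_left (norm_add_le _ _) _) ?_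
    have e1 : ‖(((Real.log (C n) - φ0 : ℝ)) : ℂ)‖ = |Real.log (C n) - φ0| := by
      rw [Complex.norm_real, Real.norm_eq_abs]
    have e2 : ‖(((α n + S n - φ1 : ℝ)) : ℂ) * z‖ ≤ R * |α n + S n - φ1| := by
      rw [norm_mul, Complex.norm_real, Real.norm_eq_abs]
      calc |α n + S n - φ1| * ‖z‖ ≤ |α n + S n - φ1| * R :=
            mul_le_mul_of_nonneg_left hzR (abs_nonneg _)
        _ = R * |α n + S n - φ1| := mul_comm _ _
    rw [hδdef, e1]
    exact add_le_add (add_le_add_right e2 _) hL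
  have hδn1 : δ n ≤ 1 := le_of_lt (lt_of_lt_of_le hn1 (min_le_left _ _))
  have hδnε : δ n < ε / (2 * Real.exp B) := lt_of_lt_of_le hn1 (min_le_right _ _)
  -- final estimate
  have hT : ‖Complex.exp T‖ ≤ Real.exp B := by
    rw [Complex.norm_exp]
    refine Real.exp_le_exp.2 ?_
    calc T.re ≤ |T.re| := le_abs_self _
      _ ≤ ‖T‖ := Complex.abs_re_le_norm T
      _ ≤ ‖(φ0 : ℂ)‖ + ‖(φ1 : ℂ) * z‖ := by
          rw [hTdef]; exact norm_add_le _ _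
      _ ≤ |φ0| + |φ1| * R := by
          rw [norm_mul, Complex.norm_real, Complex.norm_real, Real.norm_eq_abs, Real.norm_eq_abs]
          refine add_le_add_right ?_ _
          exact mul_le_mul_of_nonneg_left hzR (abs_nonneg _)
  have key : ‖Complex.exp T - Complex.exp X‖ ≤ Real.exp B * (2 * δ n) := by
    have hXT : Complex.exp X = Complex.exp T * Complex.exp (X - T) := by
      rw [← Complex.exp_add]; congr 1; ring
    have : Complex.exp T - Complex.exp X = Complex.exp T * (1 - Complex.exp (X - T)) := by
      rw [hXT]; ring
    rw [this, norm_mul]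
    have hexp1 : ‖1 - Complex.exp (X - T)‖ ≤ 2 * δ n := by
      rw [norm_sub_rev]
      have habs : ‖X - T‖ ≤ 1 := le_trans hE hδn1
      have := Complex.norm_exp_sub_one_le habs
      refine this.trans ?_
      linarith [hE]
    exact mul_le_mul hT hexp1 (norm_nonneg _) (le_of_lt (Real.exp_pos _))
  rw [dist_eq_norm]
  show ‖Complex.exp T - (C n : ℂ) * (∏' j, (1 + (γ n j : ℂ) * z))
      * Complex.exp ((α n : ℂ) * z)‖ < ε
  rw [hfe]
  calc ‖Complex.exp T - Complex.exp X‖ ≤ Real.exp B * (2 * δ n) := key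
    _ < Real.exp B * (2 * (ε / (2 * Real.exp B))) := by
        have := Real.exp_pos B
        have h2δ : 2 * δ n < 2 * (ε / (2 * Real.exp B)) := by linarith
        exact mul_lt_mul_of_pos_left h2δ this
    _ = ε := by
        have := (Real.exp_pos B).ne'
        field_simp
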